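/- Let X be a real n×p matrix with rank(X) = p and β₀ ∈ ℝᵖ. On a probability space, let S : Ω → ℝ^{r×n} (p ≤ r ≤ n) be a random matrix and let Y : Ω → ℝ^{p×r} be such that for every ω, Y(ω) is the Moore–Penrose inverse of S(ω)X; set P₀(ω) = Y(ω)S(ω)X. Let ε : Ω → ℝⁿ be a random vector, independent of S, with integrable components and E[ε_i] = 0 for all i. Assume all entries of Y·S and of P₀ are integrable. Set y = Xβ₀ + ε and β̃ = Y S y. Then the total expectation of the sketched solution is E[β̃] = E[P₀]β₀ = β₀ − (I_p − E[P₀])β₀ componentwise, where E[P₀] is the entrywise expectation of P₀. -/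

import Mathlib

open Matrix MeasureTheory

open Filter Topology

namespace SketchedSolutionAux


lemma dot_tmul {r q : ℕ} (B : Matrix (Fin r) (Fin q) ℝ) (x : Fin q → ℝ) :
    x ⬝ᵥ ((Bᵀ * B) *ᵥ x) = (B *ᵥ x) ⬝ᵥ (B *ᵥ x) := by
  rw [← mulVec_mulVec, Matrix.dotProduct_mulVec, vecMul_transpose]

lemma dot_self_nonneg {q : ℕ} (v : Fin q → ℝ) : 0 ≤ v ⬝ᵥ v :=
  Finset.sum_nonneg fun i _ => mul_self_nonneg _

lemma dot_self_pos {q : ℕ} {v : Fin q → ℝ} (hv : v ≠ 0) : 0 < v ⬝ᵥ v :=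
  lt_of_le_of_ne (dot_self_nonneg v) (fun h => hv (by rwa [eq_comm, dotProduct_self_eq_zero] at h))

lemma star_pi {q : ℕ} (v : Fin q → ℝ) : star v = v := by funext i; simp

lemma posDef_add_smul_one {q : ℕ} {M : Matrix (Fin q) (Fin q) ℝ} (hM : M.PosSemidef)
    {δ : ℝ} (hδ : 0 < δ) : (M + δ • 1).PosDef := by
  rw [posDef_iff_dotProduct_mulVec]
  constructor
  · unfold Matrix.IsHermitian at *
    rw [conjTranspose_add, hM.1, conjTranspose_smul, conjTranspose_one]
    simp
  · intro x hx
    have h2 := hM.dotProduct_mulVec_nonneg x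
    rw [star_pi] at h2 ⊢
    rw [add_mulVec, dotProduct_add, smul_mulVec, one_mulVec, dotProduct_smul,
      smul_eq_mul]
    have := dot_self_pos hx
    nlinarith

lemma entry_abs_le_one {q : ℕ} {M : Matrix (Fin q) (Fin q) ℝ} (hM : M.PosSemidef)
    {δ : ℝ} (hδ : 0 < δ) (hpd : (M + δ • 1).PosDef) (i k : Fin q) :
    |(δ • (M + δ • 1)⁻¹) i k| ≤ 1 := by
  set Mδ := M + δ • 1 with hMδ
  have hdet : IsUnit Mδ.det := isUnit_iff_ne_zero.mpr hpd.det_pos.ne'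
  set w : Fin q → ℝ := (δ • Mδ⁻¹) *ᵥ (Pi.single k 1 : Fin q → ℝ) with hw
  have hwik : (δ • Mδ⁻¹) i k = w i := by
    simp [hw, Matrix.mulVec, dotProduct, Pi.single_apply]
  have hMw : Mδ *ᵥ w = δ • (Pi.single k 1 : Fin q → ℝ) := by
    rw [hw, mulVec_mulVec, Matrix.mul_smul, Matrix.mul_nonsing_inv _ hdet, smul_mulVec,
      one_mulVec]
  have key : w ⬝ᵥ (Mδ *ᵥ w) = δ * w k := by
    rw [hMw]; simp [dotProduct, Pi.single_apply, mul_comm]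
  have expand : w ⬝ᵥ (Mδ *ᵥ w) = w ⬝ᵥ (M *ᵥ w) + δ * (w ⬝ᵥ w) := by
    rw [hMδ, add_mulVec, dotProduct_add, smul_mulVec, one_mulVec, dotProduct_smul,
      smul_eq_mul]
  have hMq : 0 ≤ w ⬝ᵥ (M *ᵥ w) := by
    have h2 := hM.dotProduct_mulVec_nonneg w; rwa [star_pi] at h2
  have hsum : w ⬝ᵥ w ≤ w k := by
    have h1 : δ * (w ⬝ᵥ w) ≤ δ * w k := by linarith [key ▸ expand]
    exact le_of_mul_le_mul_left h1 hδ
  have hwi2 : w i * w i ≤ w ⬝ᵥ w := by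
    have h : w ⬝ᵥ w = ∑ l, w l * w l := rfl
    rw [h]
    exact Finset.single_le_sum (f := fun l => w l * w l) (fun l _ => mul_self_nonneg _)
      (Finset.mem_univ i)
  have hwk2 : w k * w k ≤ w ⬝ᵥ w := by
    have h : w ⬝ᵥ w = ∑ l, w l * w l := rfl
    rw [h]
    exact Finset.single_le_sum (f := fun l => w l * w l) (fun l _ => mul_self_nonneg _)
      (Finset.mem_univ k)
  rw [hwik, ← sq_le_one_iff_abs_le_one]
  nlinarith

lemma N_posDef {r q : ℕ} (A : Matrix (Fin r) (Fin q) ℝ) (Y : Matrix (Fin q) (Fin r) ℝ)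
    (h2 : Y * (A * Y) = Y) (h4 : (Y * A)ᵀ = Y * A) :
    (Aᵀ * A + (1 - Y * A)).PosDef := by
  set P := Y * A with hP
  rw [posDef_iff_dotProduct_mulVec]
  constructor
  · show (Aᵀ * A + (1 - P))ᴴ = _
    rw [conjTranspose_eq_transpose_of_trivial, transpose_add, transpose_mul,
      transpose_transpose, transpose_sub, transpose_one, h4]
  · intro x hx
    rw [star_pi, add_mulVec, dotProduct_add]
    have e1 : x ⬝ᵥ ((Aᵀ * A) *ᵥ x) = (A *ᵥ x) ⬝ᵥ (A *ᵥ x) := dot_tmul A x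
    have hPP : P * P = P := by
      rw [hP, ← Matrix.mul_assoc (Y * A) Y A, Matrix.mul_assoc Y A Y, h2]
    have hQ : (1 - P)ᵀ * (1 - P) = 1 - P := by
      rw [transpose_sub, transpose_one, h4]
      have h : (1 - P) * (1 - P) = 1 - P - P + P * P := by noncomm_ring
      rw [h, hPP]; abel
    have e2 : x ⬝ᵥ ((1 - P) *ᵥ x) = ((1 - P) *ᵥ x) ⬝ᵥ ((1 - P) *ᵥ x) := by
      conv_lhs => rw [← hQ]
      exact dot_tmul (1 - P) x
    rw [e1, e2]
    rcases eq_or_ne (A *ᵥ x) 0 with h | h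
    · have hx1 : (1 - P) *ᵥ x = x := by
        rw [sub_mulVec, one_mulVec, hP, ← mulVec_mulVec, h, mulVec_zero, sub_zero]
      rw [hx1]
      have := dot_self_pos hx
      have := dot_self_nonneg (A *ᵥ x)
      linarith
    · have := dot_self_pos h
      have := dot_self_nonneg ((1 - P) *ᵥ x)
      linarith

lemma inv_comm {q : ℕ} {M N : Matrix (Fin q) (Fin q) ℝ} (hdet : IsUnit N.det)
    (h : M * N = N * M) : M * N⁻¹ = N⁻¹ * M := by
  have e : N⁻¹ * (M * N) * N⁻¹ = N⁻¹ * (N * M) * N⁻¹ := by rw [h]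
  rw [← Matrix.mul_assoc (N⁻¹) M N, ← Matrix.mul_assoc (N⁻¹) N M,
    Matrix.nonsing_inv_mul _ hdet, Matrix.one_mul,
    Matrix.mul_assoc (N⁻¹ * M) N (N⁻¹), Matrix.mul_nonsing_inv _ hdet, Matrix.mul_one] at e
  exact e.symm

lemma approx {r q : ℕ} (A : Matrix (Fin r) (Fin q) ℝ) (Y : Matrix (Fin q) (Fin r) ℝ)
    (h1 : A * Y * A = A) (h2 : Y * (A * Y) = Y) (h3 : (A * Y)ᵀ = A * Y)
    (h4 : (Y * A)ᵀ = Y * A) :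
    ∃ K : ℝ, ∀ δ : ℝ, 0 < δ → ∀ i j,
      |((Aᵀ * A + δ • 1)⁻¹ * Aᵀ : Matrix (Fin q) (Fin r) ℝ) i j - Y i j| ≤ δ * K := by
  classical
  set M := Aᵀ * A with hMdef
  set P := Y * A with hPdef
  set N := M + (1 - P) with hNdef
  have hMherm : Mᵀ = M := by rw [hMdef, transpose_mul, transpose_transpose]
  have hMpsd : M.PosSemidef := by
    have := Matrix.posSemidef_conjTranspose_mul_self A
    rwa [conjTranspose_eq_transpose_of_trivial] at this
  have hMY : M * Y = Aᵀ := by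
    have h : (A * Y * A)ᵀ = Aᵀ * (A * Y) := by
      rw [transpose_mul, h3]
    rw [h1] at h
    rw [hMdef, Matrix.mul_assoc, ← h]
  have hPP : P * P = P := by
    rw [hPdef, ← Matrix.mul_assoc (Y * A) Y A, Matrix.mul_assoc Y A Y, h2]
  have hMP : M * P = M := by
    rw [hMdef, hPdef, Matrix.mul_assoc, ← Matrix.mul_assoc A Y A, h1]
  have hPM : P * M = M := by
    have := congrArg Matrix.transpose hMP
    rwa [transpose_mul, h4, hMherm] at this
  have hPY : P * Y = Y := by rw [hPdef, Matrix.mul_assoc, h2]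
  have hNpd : N.PosDef := N_posDef A Y h2 h4
  have hNdet : IsUnit N.det := isUnit_iff_ne_zero.mpr hNpd.det_pos.ne'
  have hNP : N * P = M := by
    rw [hNdef, Matrix.add_mul, Matrix.sub_mul, Matrix.one_mul, hPP, sub_self, add_zero, hMP]
  have hPN : P = N⁻¹ * M := by
    rw [← hNP, ← Matrix.mul_assoc, Matrix.nonsing_inv_mul _ hNdet, Matrix.one_mul]
  have hMN : M * N = N * M := by
    rw [hNdef, Matrix.mul_add, Matrix.add_mul, Matrix.mul_sub, Matrix.sub_mul,
      Matrix.mul_one, Matrix.one_mul, hMP, hPM]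
  have hMNinv : M * N⁻¹ = N⁻¹ * M := inv_comm hNdet hMN
  set C := N⁻¹ * Y with hCdef
  have hYNA : Y = N⁻¹ * Aᵀ := by
    conv_lhs => rw [← hPY, hPN, Matrix.mul_assoc, hMY]
  have hMC : M * C = Y := by
    rw [hCdef, ← Matrix.mul_assoc, hMNinv, Matrix.mul_assoc, hMY, ← hYNA]
  refine ⟨2 * ∑ a, ∑ b, |C a b|, ?_⟩
  intro δ hδ i j
  set Mδ := M + δ • 1 with hMδdef
  have hpd : Mδ.PosDef := posDef_add_smul_one hMpsd hδ
  have hdet : IsUnit Mδ.det := isUnit_iff_ne_zero.mpr hpd.det_pos.ne'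
  have key1 : Y = Mδ⁻¹ * Aᵀ + δ • (Mδ⁻¹ * Y) := by
    have hMδY : Mδ * Y = Aᵀ + δ • Y := by
      rw [hMδdef, Matrix.add_mul, Matrix.smul_mul, Matrix.one_mul, hMY]
    calc Y = Mδ⁻¹ * (Mδ * Y) := by
          rw [← Matrix.mul_assoc, Matrix.nonsing_inv_mul _ hdet, Matrix.one_mul]
      _ = Mδ⁻¹ * Aᵀ + δ • (Mδ⁻¹ * Y) := by rw [hMδY, Matrix.mul_add, Matrix.mul_smul]
  have key2 : Mδ⁻¹ * Y = C - δ • (Mδ⁻¹ * C) := by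
    have hYC : Y = Mδ * C - δ • C := by
      have h : M = Mδ - δ • 1 := by rw [hMδdef]; abel
      rw [← hMC, h, Matrix.sub_mul, Matrix.smul_mul, Matrix.one_mul]
    rw [hYC, Matrix.mul_sub, Matrix.mul_smul, ← Matrix.mul_assoc,
      Matrix.nonsing_inv_mul _ hdet, Matrix.one_mul]
  have hmat : Mδ⁻¹ * Aᵀ - Y = -(δ • C) + δ • ((δ • Mδ⁻¹) * C) := by
    have h : Mδ⁻¹ * Aᵀ - Y = -(δ • (Mδ⁻¹ * Y)) := by nth_rewrite 1 [key1]; abel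
    rw [h, key2, Matrix.smul_mul, smul_sub, smul_smul, ← smul_smul]
    abel
  have hentry := congrFun (congrFun hmat i) j
  simp only [Matrix.sub_apply, Matrix.neg_apply, Matrix.add_apply, Matrix.smul_apply,
    smul_eq_mul] at hentry
  rw [hentry]
  have habs1 : |(-(δ * C i j) + δ * ((δ • Mδ⁻¹) * C) i j)| ≤
      δ * |C i j| + δ * |((δ • Mδ⁻¹) * C) i j| := by
    calc |(-(δ * C i j) + δ * ((δ • Mδ⁻¹) * C) i j)| ≤
        |(-(δ * C i j))| + |δ * ((δ • Mδ⁻¹) * C) i j| := abs_add_le _ _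
      _ = δ * |C i j| + δ * |((δ • Mδ⁻¹) * C) i j| := by
        rw [abs_neg, abs_mul, abs_mul, abs_of_pos hδ]
  have habs2 : |((δ • Mδ⁻¹) * C) i j| ≤ ∑ k, |C k j| := by
    rw [Matrix.mul_apply]
    calc |∑ k, (δ • Mδ⁻¹) i k * C k j| ≤ ∑ k, |(δ • Mδ⁻¹) i k * C k j| :=
        Finset.abs_sum_le_sum_abs _ _
      _ ≤ ∑ k, |C k j| := by
        refine Finset.sum_le_sum fun k _ => ?_
        rw [abs_mul]
        calc |(δ • Mδ⁻¹) i k| * |C k j| ≤ 1 * |C k j| :=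
            mul_le_mul_of_nonneg_right (entry_abs_le_one hMpsd hδ hpd i k) (abs_nonneg _)
          _ = |C k j| := one_mul _
  have hsum1 : |C i j| ≤ ∑ a, ∑ b, |C a b| := by
    calc |C i j| ≤ ∑ b, |C i b| :=
        Finset.single_le_sum (f := fun b => |C i b|) (fun b _ => abs_nonneg _)
          (Finset.mem_univ j)
      _ ≤ ∑ a, ∑ b, |C a b| :=
        Finset.single_le_sum (f := fun a => ∑ b, |C a b|)
          (fun a _ => Finset.sum_nonneg fun b _ => abs_nonneg _) (Finset.mem_univ i)
  have hsum2 : ∑ k, |C k j| ≤ ∑ a, ∑ b, |C a b| := by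
    refine Finset.sum_le_sum fun k _ => ?_
    exact Finset.single_le_sum (f := fun b => |C k b|) (fun b _ => abs_nonneg _)
      (Finset.mem_univ j)
  calc |(-(δ * C i j) + δ * ((δ • Mδ⁻¹) * C) i j)| ≤
      δ * |C i j| + δ * |((δ • Mδ⁻¹) * C) i j| := habs1
    _ ≤ δ * (∑ a, ∑ b, |C a b|) + δ * (∑ a, ∑ b, |C a b|) := by
      have h2 := mul_le_mul_of_nonneg_left hsum1 hδ.le
      have h3 := mul_le_mul_of_nonneg_left (habs2.trans hsum2) hδ.le
      linarith
    _ = δ * (2 * ∑ a, ∑ b, |C a b|) := by ring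

lemma tendsto_entry {r q : ℕ} (A : Matrix (Fin r) (Fin q) ℝ) (Y : Matrix (Fin q) (Fin r) ℝ)
    (h1 : A * Y * A = A) (h2 : Y * (A * Y) = Y) (h3 : (A * Y)ᵀ = A * Y)
    (h4 : (Y * A)ᵀ = Y * A) (i : Fin q) (j : Fin r) :
    Tendsto (fun k : ℕ => ((Aᵀ * A + (((k : ℝ) + 1)⁻¹) • 1)⁻¹ * Aᵀ
      : Matrix (Fin q) (Fin r) ℝ) i j) atTop (𝓝 (Y i j)) := by
  obtain ⟨K, hK⟩ := approx A Y h1 h2 h3 h4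
  rw [tendsto_iff_dist_tendsto_zero]
  apply squeeze_zero (fun k => dist_nonneg)
    (g := fun k : ℕ => ((k : ℝ) + 1)⁻¹ * K)
  · intro k
    have hδ : (0:ℝ) < ((k : ℝ) + 1)⁻¹ := by positivity
    simpa [Real.dist_eq] using hK _ hδ i j
  · have h1' : Tendsto (fun k : ℕ => ((k : ℝ) + 1)⁻¹) atTop (𝓝 0) :=
      tendsto_one_div_add_atTop_nhds_zero_nat.congr (by intro m; rw [one_div])
    simpa using h1'.mul_const K

lemma measurable_det {α : Type*} [MeasurableSpace α] {q : ℕ} {f : α → Matrix (Fin q) (Fin q) ℝ}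
    (hf : ∀ i j, Measurable fun a => f a i j) :
    Measurable fun a => (f a).det := by
  simp_rw [Matrix.det_apply']
  exact Finset.measurable_sum _ fun σ _ =>
    (Finset.measurable_prod _ fun l _ => hf _ _).const_mul _

lemma measurable_inv_entry {α : Type*} [MeasurableSpace α] {q : ℕ}
    {f : α → Matrix (Fin q) (Fin q) ℝ}
    (hf : ∀ i j, Measurable fun a => f a i j) (i j : Fin q) :
    Measurable fun a => (f a)⁻¹ i j := by
  simp_rw [Matrix.inv_def, Ring.inverse_eq_inv, Matrix.smul_apply, smul_eq_mul]
  refine Measurable.mul ((measurable_det hf).inv) ?_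
  simp_rw [Matrix.adjugate_apply]
  refine measurable_det fun a b => ?_
  simp_rw [Matrix.updateRow_apply]
  by_cases h : a = j
  · simp [h]
  · simp [h]; exact hf _ _

lemma measurable_G {n p r : ℕ} (X : Matrix (Fin n) (Fin p) ℝ) (c : ℝ)
    (i : Fin p) (j : Fin n) :
    Measurable fun M : Fin r → Fin n → ℝ =>
      (((Matrix.of M * X)ᵀ * (Matrix.of M * X) + c • 1)⁻¹ * (Matrix.of M * X)ᵀ
        * Matrix.of M : Matrix (Fin p) (Fin n) ℝ) i j := by
  have hA : ∀ (a : Fin r) (b : Fin p),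
      Measurable fun M : Fin r → Fin n → ℝ => (Matrix.of M * X) a b := by
    intro a b
    simp_rw [Matrix.mul_apply]
    refine Finset.measurable_sum _ fun l _ => ?_
    exact ((measurable_pi_apply l).comp (measurable_pi_apply a)).mul_const _
  have hMat : ∀ (a b : Fin p),
      Measurable fun M : Fin r → Fin n → ℝ =>
        (((Matrix.of M * X)ᵀ * (Matrix.of M * X) + c • 1 : Matrix (Fin p) (Fin p) ℝ)) a b := by
    intro a b
    simp_rw [Matrix.add_apply, Matrix.mul_apply, Matrix.transpose_apply]
    refine Measurable.add_const ?_ _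
    exact Finset.measurable_sum _ fun l _ => (hA l a).mul (hA l b)
  have hInv := measurable_inv_entry hMat
  simp_rw [Matrix.mul_apply, Matrix.transpose_apply]
  refine Finset.measurable_sum _ fun b _ => Measurable.mul ?_ ?_
  · exact Finset.measurable_sum _ fun a _ => (hInv i a).mul (hA b a)
  · exact (measurable_pi_apply j).comp (measurable_pi_apply b)

end SketchedSolutionAux

open SketchedSolutionAux

/-- total expectation of the sketched solution: with a random sketching
matrix `S`, `Y(ω)` the Moore–Penrose inverse of `S(ω) X`, `P₀(ω) = Y(ω) S(ω) X`, and
mean-zero noise `ε` independent of `S`, the sketched solution `β̃ = Y S (Xβ₀ + ε)`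
satisfies `E[β̃] = E[P₀] β₀ = β₀ - (I - E[P₀]) β₀` (expectations entrywise). -/
theorem sketched_solution_total_expectation
    {n p r : ℕ} (X : Matrix (Fin n) (Fin p) ℝ) (hX : X.rank = p)
    (hpr : p ≤ r) (hrn : r ≤ n)
    {Ω : Type*} [MeasurableSpace Ω] (μ : Measure Ω) [IsProbabilityMeasure μ]
    (S : Ω → Matrix (Fin r) (Fin n) ℝ)
    (Y : Ω → Matrix (Fin p) (Fin r) ℝ)
    (hp1 : ∀ ω, (S ω * X) * Y ω * (S ω * X) = S ω * X)
    (hp2 : ∀ ω, Y ω * ((S ω * X) * Y ω) = Y ω)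
    (hp3 : ∀ ω, ((S ω * X) * Y ω)ᵀ = (S ω * X) * Y ω)
    (hp4 : ∀ ω, (Y ω * (S ω * X))ᵀ = Y ω * (S ω * X))
    (β₀ : Fin p → ℝ) (ε : Ω → Fin n → ℝ)
    (hindep : ProbabilityTheory.IndepFun ε ((fun ω i j => S ω i j) : Ω → Fin r → Fin n → ℝ) μ)
    (hεint : ∀ i, Integrable (fun ω => ε ω i) μ)
    (hεmean : ∀ i, ∫ ω, ε ω i ∂μ = 0)
    (hYSint : ∀ i j, Integrable (fun ω => (Y ω * S ω) i j) μ)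
    (hP0int : ∀ i j, Integrable (fun ω => (Y ω * (S ω * X)) i j) μ)
    (EP0 : Matrix (Fin p) (Fin p) ℝ)
    (hEP0 : ∀ i j, EP0 i j = ∫ ω, (Y ω * (S ω * X)) i j ∂μ)
    (βtilde : Ω → Fin p → ℝ)
    (hβtilde : ∀ ω, βtilde ω = Y ω *ᵥ (S ω *ᵥ (X *ᵥ β₀ + ε ω))) :
    (∀ i, ∫ ω, βtilde ω i ∂μ = (EP0 *ᵥ β₀) i) ∧
    EP0 *ᵥ β₀ = β₀ - (1 - EP0) *ᵥ β₀ := by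
  classical
  constructor
  · intro i
    -- the sub-σ-algebra generated by S
    set S' : Ω → Fin r → Fin n → ℝ := fun ω a b => S ω a b with hS'
    set m0 : MeasurableSpace Ω := MeasurableSpace.comap S' inferInstance with hm0
    have hS'm0 : @Measurable Ω (Fin r → Fin n → ℝ) m0 _ S' := fun s hs => ⟨s, hs, rfl⟩
    -- (Y S) entries are m0-measurable
    have hmeas : ∀ (b : Fin n), @Measurable Ω ℝ m0 _ (fun ω => (Y ω * S ω) i b) := by
      intro b
      have hfk : ∀ k : ℕ, @Measurable Ω ℝ m0 _ (fun ω =>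
          ((((S ω * X)ᵀ * (S ω * X) + (((k : ℝ) + 1)⁻¹) • 1)⁻¹ * (S ω * X)ᵀ * S ω
            : Matrix (Fin p) (Fin n) ℝ) i b)) := fun k =>
        (measurable_G X (((k : ℝ) + 1)⁻¹) i b).comp hS'm0
      refine @measurable_of_tendsto_metrizable Ω ℝ m0 _ _ _ _ _ _ hfk ?_
      rw [tendsto_pi_nhds]
      intro ω
      have hconv : ∀ c : Fin r,
          Tendsto (fun k : ℕ => (((S ω * X)ᵀ * (S ω * X) + (((k : ℝ) + 1)⁻¹) • 1)⁻¹
            * (S ω * X)ᵀ : Matrix (Fin p) (Fin r) ℝ) i c) atTop (𝓝 (Y ω i c)) :=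
        fun c => tendsto_entry (S ω * X) (Y ω) (hp1 ω) (hp2 ω) (hp3 ω) (hp4 ω) i c
      have : Tendsto (fun k : ℕ => ∑ c, (((S ω * X)ᵀ * (S ω * X) + (((k : ℝ) + 1)⁻¹) • 1)⁻¹
            * (S ω * X)ᵀ : Matrix (Fin p) (Fin r) ℝ) i c * S ω c b) atTop
          (𝓝 (∑ c, Y ω i c * S ω c b)) :=
        tendsto_finset_sum _ fun c _ => (hconv c).mul_const _
      have hgoal : (Y ω * S ω) i b = ∑ c, Y ω i c * S ω c b := Matrix.mul_apply
      rw [hgoal]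
      exact this.congr fun k => (Matrix.mul_apply).symm
    -- independence of (Y S) entries from ε entries
    have hIf : ∀ b : Fin n, ProbabilityTheory.IndepFun
        (fun ω => (Y ω * S ω) i b) (fun ω => ε ω b) μ := by
      intro b
      have hbase : ProbabilityTheory.Indep
          (MeasurableSpace.comap S' inferInstance)
          (MeasurableSpace.comap ε inferInstance) μ :=
        ((ProbabilityTheory.IndepFun_iff_Indep ε S' μ).mp hindep).symm
      have hle1 : MeasurableSpace.comap (fun ω => (Y ω * S ω) i b) inferInstance ≤
          MeasurableSpace.comap S' inferInstance := by
        rintro s ⟨t, ht, rfl⟩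
        exact hmeas b ht
      have hle2 : MeasurableSpace.comap (fun ω => ε ω b) inferInstance ≤
          MeasurableSpace.comap ε inferInstance := by
        rintro s ⟨t, ht, rfl⟩
        exact ⟨(fun v : Fin n → ℝ => v b) ⁻¹' t, measurable_pi_apply b ht, rfl⟩
      exact (ProbabilityTheory.IndepFun_iff_Indep _ _ μ).mpr
        (ProbabilityTheory.indep_of_indep_of_le_right
          (ProbabilityTheory.indep_of_indep_of_le_left hbase hle1) hle2)
    -- integrability of the cross terms and their vanishing integral
    have hprod_int : ∀ b : Fin n, Integrable (fun ω => (Y ω * S ω) i b * ε ω b) μ :=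
      fun b => (hIf b).integrable_mul (hYSint i b) (hεint b)
    have hprod_zero : ∀ b : Fin n, ∫ ω, (Y ω * S ω) i b * ε ω b ∂μ = 0 := by
      intro b
      have h := (hIf b).integral_mul_eq_mul_integral (hYSint i b).aestronglyMeasurable
        (hεint b).aestronglyMeasurable
      have h2 : ∫ ω, (Y ω * S ω) i b * ε ω b ∂μ =
          (∫ ω, (Y ω * S ω) i b ∂μ) * ∫ ω, ε ω b ∂μ := h
      rw [h2, hεmean b, mul_zero]
    -- decomposition of βtilde
    have hdecomp : ∀ ω, βtilde ω i =
        (∑ b, (Y ω * (S ω * X)) i b * β₀ b) + ∑ b, (Y ω * S ω) i b * ε ω b := by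
      intro ω
      rw [hβtilde ω]
      have hvec : Y ω *ᵥ (S ω *ᵥ (X *ᵥ β₀ + ε ω)) =
          (Y ω * (S ω * X)) *ᵥ β₀ + (Y ω * S ω) *ᵥ ε ω := by
        rw [mulVec_add, mulVec_add, mulVec_mulVec, mulVec_mulVec, mulVec_mulVec,
          Matrix.mul_assoc]
      rw [hvec]
      simp [Matrix.mulVec, dotProduct]
    have hint1 : Integrable (fun ω => ∑ b, (Y ω * (S ω * X)) i b * β₀ b) μ :=
      integrable_finset_sum _ fun b _ => (hP0int i b).mul_const _
    have hint2 : Integrable (fun ω => ∑ b, (Y ω * S ω) i b * ε ω b) μ :=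
      integrable_finset_sum _ fun b _ => hprod_int b
    calc ∫ ω, βtilde ω i ∂μ
        = ∫ ω, ((∑ b, (Y ω * (S ω * X)) i b * β₀ b) + ∑ b, (Y ω * S ω) i b * ε ω b) ∂μ := by
          exact integral_congr_ae (Filter.Eventually.of_forall hdecomp)
      _ = (∫ ω, ∑ b, (Y ω * (S ω * X)) i b * β₀ b ∂μ)
          + ∫ ω, ∑ b, (Y ω * S ω) i b * ε ω b ∂μ := integral_add hint1 hint2
      _ = (∑ b, ∫ ω, (Y ω * (S ω * X)) i b * β₀ b ∂μ)
          + ∑ b, ∫ ω, (Y ω * S ω) i b * ε ω b ∂μ := by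
          rw [integral_finset_sum _ fun b _ => (hP0int i b).mul_const _,
            integral_finset_sum _ fun b _ => hprod_int b]
      _ = (∑ b, EP0 i b * β₀ b) + 0 := by
          congr 1
          · refine Finset.sum_congr rfl fun b _ => ?_
            rw [integral_mul_const, hEP0 i b]
          · simp [hprod_zero]
      _ = (EP0 *ᵥ β₀) i := by
          rw [add_zero]
          simp [Matrix.mulVec, dotProduct]
  · rw [sub_mulVec, one_mulVec]
    abel
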